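/- Let σ ∈ (0,1) and β ∈ (0,1/2) satisfy 1 − β/2 = σ^{σ/(1−σ)}. Then for every pair of sequences (c_t)_{t∈ℕ}, (l_t)_{t∈ℕ} with 0 ≤ c_t ≤ C for some constant C, l_t ∈ [0,1] for all t, and ∑_{t=0}^∞ β^t (c_t^σ − l_t^σ) ≥ 0, one has the strict inequality ∑_{t=0}^∞ β^t (l_t − c_t) < (1 − β/2 − σ^{1/(1−σ)})/(1 − β). -/

import Mathlib

private lemma bern {σ y : ℝ} (hσ0 : 0 < σ) (hσ1 : σ < 1) (hy : 0 ≤ y) :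
    y ^ σ ≤ 1 - σ + σ * y := by
  have h := Real.geom_mean_le_arith_mean2_weighted (by linarith : (0:ℝ) ≤ 1 - σ) hσ0.le
    zero_le_one hy (by ring)
  rw [Real.one_rpow] at h
  linarith

private lemma bern_eq {σ y : ℝ} (hσ0 : 0 < σ) (hσ1 : σ < 1) (hy : 0 ≤ y)
    (h : y ^ σ = 1 - σ + σ * y) : y = 1 := by
  by_contra hne
  have hsc := Real.strictConcaveOn_rpow hσ0 hσ1
  have h2 := hsc.2 (Set.mem_Ici.2 hy) (Set.mem_Ici.2 zero_le_one) hne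
    (by norm_num : (0:ℝ) < 1/2) (by norm_num : (0:ℝ) < 1/2) (by norm_num)
  simp only [smul_eq_mul, Real.one_rpow] at h2
  have h3 := bern hσ0 hσ1 (by linarith : (0:ℝ) ≤ 1/2 * y + 1/2 * 1)
  nlinarith

private lemma cs_eq {σ : ℝ} (hσ0 : 0 < σ) (hσ1 : σ < 1) :
    σ ^ (1/(1-σ)) = σ * σ ^ (σ/(1-σ)) := by
  have h1σ : (0:ℝ) < 1 - σ := by linarith
  rw [← Real.rpow_one_add' hσ0.le (by positivity)]
  congr 1
  have : (1:ℝ) - σ ≠ 0 := by intro h; linarith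
  field_simp
  ring

private lemma csσ_eq {σ : ℝ} (hσ0 : 0 < σ) (hσ1 : σ < 1) :
    (σ ^ (1/(1-σ))) ^ σ = σ ^ (σ/(1-σ)) := by
  rw [← Real.rpow_mul hσ0.le]
  congr 1
  have : (1:ℝ) - σ ≠ 0 := by intro h; linarith
  field_simp

private lemma keyineq {σ : ℝ} (hσ0 : 0 < σ) (hσ1 : σ < 1) {x : ℝ} (hx : 0 ≤ x) :
    x ^ σ - x ≤ (1 - σ) * σ ^ (σ/(1-σ)) ∧
    (x ^ σ - x = (1 - σ) * σ ^ (σ/(1-σ)) → x = σ ^ (1/(1-σ))) := by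
  set A : ℝ := σ ^ (σ/(1-σ)) with hA
  have hA0 : 0 < A := Real.rpow_pos_of_pos hσ0 _
  have h1σ : (0:ℝ) < 1 - σ := by linarith
  have hcs : σ ^ (1/(1-σ)) = σ * A := cs_eq hσ0 hσ1
  have hcs0 : 0 < σ * A := by positivity
  set y : ℝ := x / (σ * A) with hy
  have hy0 : 0 ≤ y := by positivity
  have hxy : x = (σ * A) * y := by rw [hy]; exact (mul_div_cancel₀ x hcs0.ne').symm
  have hxσ : x ^ σ = A * y ^ σ := by
    rw [hxy, Real.mul_rpow hcs0.le hy0, ← hcs, csσ_eq hσ0 hσ1]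
  have hb := bern hσ0 hσ1 hy0
  constructor
  · rw [hxσ]
    rw [hxy]
    nlinarith
  · intro heq
    rw [hxσ] at heq
    rw [hxy] at heq
    have hyeq : y ^ σ = 1 - σ + σ * y := by nlinarith
    have := bern_eq hσ0 hσ1 hy0 hyeq
    rw [hcs, hxy, this, mul_one]

set_option maxHeartbeats 2000000 in
theorem stmt14 (σ β : ℝ) (hσ0 : 0 < σ) (hσ1 : σ < 1) (hβ0 : 0 < β) (hβ1 : β < 1 / 2)
    (hcal : 1 - β / 2 = σ ^ (σ / (1 - σ)))
    (c l : ℕ → ℝ) (C : ℝ)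
    (hc0 : ∀ t, 0 ≤ c t) (hcC : ∀ t, c t ≤ C)
    (hl : ∀ t, 0 ≤ l t ∧ l t ≤ 1)
    (hpc : 0 ≤ ∑' t : ℕ, β ^ t * ((c t) ^ σ - (l t) ^ σ)) :
    (∑' t : ℕ, β ^ t * (l t - c t)) < (1 - β / 2 - σ ^ (1 / (1 - σ))) / (1 - β) := by
  have hβ1' : β < 1 := by linarith
  have h1β : (0:ℝ) < 1 - β := by linarith
  have hgeo : Summable (fun t : ℕ => β ^ t) := summable_geometric_of_lt_one hβ0.le hβ1'
  have hC0 : 0 ≤ C := le_trans (hc0 0) (hcC 0)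
  have hl0 : ∀ t, 0 ≤ l t := fun t => (hl t).1
  have hl1 : ∀ t, l t ≤ 1 := fun t => (hl t).2
  have hlσ0 : ∀ t, 0 ≤ l t ^ σ := fun t => Real.rpow_nonneg (hl0 t) σ
  have hlσ1 : ∀ t, l t ^ σ ≤ 1 := fun t => Real.rpow_le_one (hl0 t) (hl1 t) hσ0.le
  have hcσ0 : ∀ t, 0 ≤ c t ^ σ := fun t => Real.rpow_nonneg (hc0 t) σ
  have hcσC : ∀ t, c t ^ σ ≤ C ^ σ := fun t => Real.rpow_le_rpow (hc0 t) (hcC t) hσ0.le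
  have hCσ0 : 0 ≤ C ^ σ := Real.rpow_nonneg hC0 σ
  -- summability helper
  have hsummable : ∀ (a : ℕ → ℝ) (M : ℝ), (∀ t, |a t| ≤ M) →
      Summable (fun t => β ^ t * a t) := by
    intro a M h
    apply Summable.of_norm_bounded (hgeo.mul_left M)
    intro t
    rw [norm_mul, norm_pow, Real.norm_eq_abs, Real.norm_eq_abs, abs_of_nonneg hβ0.le,
      mul_comm]
    exact mul_le_mul_of_nonneg_right (h t) (by positivity)
  have hsum1 : Summable (fun t => β ^ t * (l t - c t)) := by
    refine hsummable _ (1 + C) (fun t => ?_)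
    rw [abs_le]
    constructor <;> [skip; skip] <;>
      [linarith [hl0 t, hl1 t, hc0 t, hcC t]; linarith [hl0 t, hl1 t, hc0 t, hcC t]]
  have hsum2 : Summable (fun t => β ^ t * ((c t) ^ σ - (l t) ^ σ)) := by
    refine hsummable _ (1 + C ^ σ) (fun t => ?_)
    rw [abs_le]
    exact ⟨by linarith [hcσ0 t, hcσC t, hlσ0 t, hlσ1 t],
      by linarith [hcσ0 t, hcσC t, hlσ0 t, hlσ1 t]⟩
  have hsum3 : Summable (fun t => β ^ t * ((l t - l t ^ σ) + (c t ^ σ - c t))) := by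
    refine hsummable _ (1 + C + C ^ σ) (fun t => ?_)
    rw [abs_le]
    exact ⟨by linarith [hcσ0 t, hcσC t, hlσ0 t, hlσ1 t, hl0 t, hl1 t, hc0 t, hcC t],
      by linarith [hcσ0 t, hcσC t, hlσ0 t, hlσ1 t, hl0 t, hl1 t, hc0 t, hcC t]⟩
  have hsumL : Summable (fun t => β ^ t * l t) := by
    refine hsummable _ 1 (fun t => ?_)
    rw [abs_le]
    exact ⟨by linarith [hl0 t, hl1 t], by linarith [hl0 t, hl1 t]⟩
  -- constants
  set K : ℝ := 1 - β / 2 - σ ^ (1/(1-σ)) with hKdef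
  have hKval : K = (1 - σ) * σ ^ (σ/(1-σ)) := by
    rw [hKdef, cs_eq hσ0 hσ1, ← hcal]; ring
  -- per-term bound
  have hllσ : ∀ t, l t ≤ l t ^ σ := by
    intro t
    rcases eq_or_lt_of_le (hl0 t) with h0 | h0
    · rw [← h0, Real.zero_rpow hσ0.ne']
    · calc l t = l t ^ (1:ℝ) := (Real.rpow_one _).symm
        _ ≤ l t ^ σ := Real.rpow_le_rpow_of_exponent_ge h0 (hl1 t) hσ1.le
  have hterm3 : ∀ t, (l t - l t ^ σ) + (c t ^ σ - c t) ≤ K := by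
    intro t
    have h1 := (keyineq hσ0 hσ1 (hc0 t)).1
    have h2 := hllσ t
    rw [hKval]
    linarith
  have hterm3' : ∀ t, β ^ t * ((l t - l t ^ σ) + (c t ^ σ - c t)) ≤ β ^ t * K := by
    intro t
    exact mul_le_mul_of_nonneg_left (hterm3 t) (by positivity)
  have hsumK : Summable (fun t : ℕ => β ^ t * K) := hgeo.mul_right K
  have htsumK : ∑' t : ℕ, β ^ t * K = (1-β)⁻¹ * K := by
    rw [tsum_mul_right, tsum_geometric_of_lt_one hβ0.le hβ1']
  have hFle : ∑' t, β ^ t * ((l t - l t ^ σ) + (c t ^ σ - c t)) ≤ (1-β)⁻¹ * K := by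
    rw [← htsumK]
    exact Summable.tsum_le_tsum hterm3' hsum3 hsumK
  have hSFP : ∑' t, β ^ t * (l t - c t)
      = (∑' t, β ^ t * ((l t - l t ^ σ) + (c t ^ σ - c t)))
        - ∑' t, β ^ t * ((c t) ^ σ - (l t) ^ σ) := by
    rw [← Summable.tsum_sub hsum3 hsum2]
    congr 1; funext t; ring
  -- target value
  have hTval : (1 - β / 2 - σ ^ (1 / (1 - σ))) / (1 - β) = (1-β)⁻¹ * K := by
    rw [hKdef, div_eq_inv_mul]
  by_contra hcon
  push_neg at hcon
  rw [hTval] at hcon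
  rw [hSFP] at hcon
  -- deduce P = 0 and F = (1-β)⁻¹ * K
  have hP0 : ∑' t, β ^ t * ((c t) ^ σ - (l t) ^ σ) = 0 := le_antisymm (by linarith) hpc
  have hFeq : ∑' t, β ^ t * ((l t - l t ^ σ) + (c t ^ σ - c t)) = (1-β)⁻¹ * K :=
    le_antisymm hFle (by linarith)
  -- each slack term is zero
  have hQsum : Summable (fun t => β ^ t * K - β ^ t * ((l t - l t ^ σ) + (c t ^ σ - c t))) :=
    hsumK.sub hsum3
  have hQ0 : ∑' t, (β ^ t * K - β ^ t * ((l t - l t ^ σ) + (c t ^ σ - c t))) = 0 := by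
    rw [Summable.tsum_sub hsumK hsum3, htsumK, hFeq, sub_self]
  have hEt : ∀ t, (l t - l t ^ σ) + (c t ^ σ - c t) = K := by
    intro t
    have hle := Summable.le_tsum hQsum t (fun j _ => by
      have := hterm3' j; linarith)
    rw [hQ0] at hle
    have hge := hterm3' t
    have hβt : (0:ℝ) < β ^ t := by positivity
    have : β ^ t * ((l t - l t ^ σ) + (c t ^ σ - c t)) = β ^ t * K := by linarith
    exact mul_left_cancel₀ hβt.ne' this
  -- deduce c t = σ^(1/(1-σ)) and l t ∈ {0,1}
  have hlσeq : ∀ t, l t ^ σ = l t := by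
    intro t
    have h1 := (keyineq hσ0 hσ1 (hc0 t)).1
    have h2 := hllσ t
    have := hEt t
    rw [hKval] at this
    linarith
  have hceq : ∀ t, c t = σ ^ (1/(1-σ)) := by
    intro t
    refine (keyineq hσ0 hσ1 (hc0 t)).2 ?_
    have := hEt t
    rw [hKval] at this
    have := hlσeq t
    linarith [hEt t, hlσeq t]
  have hl01 : ∀ t, l t = 0 ∨ l t = 1 := by
    intro t
    by_contra h
    push_neg at h
    have h0 : 0 < l t := lt_of_le_of_ne (hl0 t) (Ne.symm h.1)
    have h1 : l t < 1 := lt_of_le_of_ne (hl1 t) h.2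
    have := Real.rpow_lt_rpow_of_exponent_gt h0 h1 hσ1
    rw [Real.rpow_one, hlσeq t] at this
    exact lt_irrefl _ this
  -- rewrite P
  have hPterm : ∀ t, β ^ t * ((c t) ^ σ - (l t) ^ σ) = β ^ t * (1 - β/2) - β ^ t * l t := by
    intro t
    rw [hceq t, csσ_eq hσ0 hσ1, ← hcal, hlσeq t]
    ring
  have hsumhalf : Summable (fun t : ℕ => β ^ t * (1 - β/2)) := hgeo.mul_right _
  have hL : ∑' t, β ^ t * l t = (1-β)⁻¹ * (1 - β/2) := by
    have := hP0
    rw [tsum_congr hPterm, Summable.tsum_sub hsumhalf hsumL, tsum_mul_right,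
      tsum_geometric_of_lt_one hβ0.le hβ1'] at this
    linarith [this]
  -- decompose L
  have hsumL1 : Summable (fun t => β ^ (t+1) * l (t+1)) := (summable_nat_add_iff 1).2 hsumL
  have hsumL2 : Summable (fun t => β ^ (t+1+1) * l (t+1+1)) :=
    (summable_nat_add_iff 1).2 hsumL1
  have hdec0 := Summable.tsum_eq_zero_add hsumL
  have hdec1 := Summable.tsum_eq_zero_add hsumL1
  set R : ℝ := ∑' t, β ^ (t+1+1) * l (t+1+1) with hR
  have hR0 : 0 ≤ R := tsum_nonneg (fun t => mul_nonneg (by positivity) (hl0 _))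
  have hRle : R ≤ β ^ 2 * (1-β)⁻¹ := by
    have hb : ∀ t, β ^ (t+1+1) * l (t+1+1) ≤ β ^ 2 * β ^ t := by
      intro t
      have : β ^ (t+1+1) = β ^ 2 * β ^ t := by ring
      rw [this]
      have hbt : (0:ℝ) ≤ β ^ 2 * β ^ t := by positivity
      nlinarith [hl1 (t+1+1), hl0 (t+1+1)]
    calc R ≤ ∑' t : ℕ, β ^ 2 * β ^ t := Summable.tsum_le_tsum hb hsumL2 (hgeo.mul_left _)
      _ = β ^ 2 * (1-β)⁻¹ := by rw [tsum_mul_left, tsum_geometric_of_lt_one hβ0.le hβ1']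
  -- final contradiction
  have hkey : (1-β) * (l 0 + β * l 1 + R) = 1 - β/2 := by
    have hLsum : l 0 + β * l 1 + R = (1-β)⁻¹ * (1 - β/2) := by
      rw [← hL, hdec0, hdec1]
      simp [pow_zero, pow_one]
      ring
    rw [hLsum]
    field_simp
  have hRβ : (1-β) * R ≤ β ^ 2 := by
    calc (1-β) * R ≤ (1-β) * (β ^ 2 * (1-β)⁻¹) := by
          exact mul_le_mul_of_nonneg_left hRle h1β.le
      _ = β ^ 2 := by field_simp
  rcases hl01 0 with h0 | h0 <;> rcases hl01 1 with h1 | h1 <;>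
    rw [h0, h1] at hkey <;> nlinarith [hR0, hRβ]
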